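/- Let Γ = Cay(V, S) be a cubelike graph on V = 𝔽₂^m with 0 ∉ S, let a, b, c, d ∈ V with a + b ∈ S, c + d ∈ S, b ≠ c, a ≠ d, and let t > 0. Then Γ has PEST from the edge (a,b) to the edge (c,d) at time t if and only if both of the following hold: (1) a + b + c + d = 0; (2) for every x₀ ∈ V with (b+a)·x₀ = 1 and (c+a)·x₀ = 0, and every x ∈ V with (b+a)·x = 1, one has exp(i t (λ_{x₀} − λ_x)) = (−1)^{(c+a)·x}. -/

import Mathlib

open Matrix Finset

noncomputable section

/-- The adjacency matrix of the Cayley (cubelike) graph `Cay(G, S)`. -/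
def adjMatrix {G : Type*} [AddCommGroup G] [Fintype G] [DecidableEq G]
    (S : Finset G) : Matrix G G ℂ :=
  fun u v => if u + v ∈ S then 1 else 0

/-- The transfer matrix `H(t) = exp(i t A)`. -/
def transferMatrix {G : Type*} [AddCommGroup G] [Fintype G] [DecidableEq G]
    (S : Finset G) (t : ℝ) : Matrix G G ℂ :=
  NormedSpace.exp (Complex.I • ((t : ℂ) • adjMatrix S))

/-- The standard basis vector `e_a` of `ℂ^V`. -/
def stdBasis {G : Type*} [DecidableEq G] (a : G) : G → ℂ :=
  fun v => if v = a then 1 else 0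

/-- Perfect edge state transfer from the edge `(a,b)` to the edge `(c,d)` at time `t`:
`|(1/2)(e_c - e_d)ᵀ H(t)(e_a - e_b)|² = 1`. -/
def hasPEST {G : Type*} [AddCommGroup G] [Fintype G] [DecidableEq G]
    (S : Finset G) (a b c d : G) (t : ℝ) : Prop :=
  ‖(1 / 2 : ℂ) * dotProduct (stdBasis c - stdBasis d)
      (transferMatrix S t *ᵥ (stdBasis a - stdBasis b))‖ ^ 2 = 1

/-- The eigenvalue `λ_x = ∑_{s ∈ S} (-1)^{x·s}` of a cubelike graph. -/
def lam {m : ℕ} (S : Finset (Fin m → ZMod 2)) (x : Fin m → ZMod 2) : ℤ :=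
  ∑ s ∈ S, (-1) ^ (x ⬝ᵥ s).val

namespace PESTAux

variable {m : ℕ}

lemma z2cases (p : ZMod 2) : p = 0 ∨ p = 1 := by revert p; decide

lemma z2add (p : ZMod 2) : p + p = 0 := by revert p; decide

lemma vec_add_self (x : Fin m → ZMod 2) : x + x = 0 := funext fun i => z2add _

lemma add_eq_zero_iff' {u v : Fin m → ZMod 2} : u + v = 0 ↔ u = v := by
  constructor
  · intro h
    have := congrArg (· + v) h
    simpa [add_assoc, vec_add_self] using this
  · rintro rfl; exact vec_add_self u

def chi (x v : Fin m → ZMod 2) : ℂ := (-1) ^ (x ⬝ᵥ v).val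

lemma neg_one_pow_val_add (p q : ZMod 2) :
    ((-1 : ℂ)) ^ (p + q).val = (-1) ^ p.val * (-1) ^ q.val := by
  rcases z2cases p with hp | hp <;> rcases z2cases q with hq | hq <;>
    subst hp <;> subst hq <;>
    norm_num [show ((1:ZMod 2)).val = 1 from rfl, show ((2:ZMod 2)).val = 0 from rfl,
      show ((0:ZMod 2)).val = 0 from rfl]

lemma chi_add_right (x u v : Fin m → ZMod 2) : chi x (u + v) = chi x u * chi x v := by
  unfold chi; rw [dotProduct_add, neg_one_pow_val_add]

lemma chi_add_left (x y v : Fin m → ZMod 2) : chi (x + y) v = chi x v * chi y v := by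
  unfold chi; rw [add_dotProduct, neg_one_pow_val_add]

lemma chi_comm (x v : Fin m → ZMod 2) : chi x v = chi v x := by
  unfold chi; rw [dotProduct_comm]

lemma chi_eq_one {x v : Fin m → ZMod 2} (h : x ⬝ᵥ v = 0) : chi x v = 1 := by
  simp [chi, h]

lemma chi_eq_neg_one {x v : Fin m → ZMod 2} (h : x ⬝ᵥ v = 1) : chi x v = -1 := by
  simp [chi, h, show ((1:ZMod 2)).val = 1 from rfl]

lemma abs_chi (x v : Fin m → ZMod 2) : ‖chi x v‖ = 1 := by
  rcases z2cases (x ⬝ᵥ v) with h | h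
  · rw [chi_eq_one h]; simp
  · rw [chi_eq_neg_one h]; simp

lemma exists_dot {v : Fin m → ZMod 2} (hv : v ≠ 0) : ∃ e, e ⬝ᵥ v = 1 := by
  obtain ⟨j, hj⟩ := Function.ne_iff.mp hv
  refine ⟨Pi.single j 1, ?_⟩
  rw [single_dotProduct, one_mul]
  rcases z2cases (v j) with h | h
  · exact absurd h hj
  · exact h


lemma orth (w : Fin m → ZMod 2) :
    ∑ x : Fin m → ZMod 2, chi x w = if w = 0 then ((2 ^ m : ℕ) : ℂ) else 0 := by
  split_ifs with h
  · subst h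
    have : ∀ x : Fin m → ZMod 2, chi x 0 = 1 := fun x => chi_eq_one (dotProduct_zero x)
    rw [Finset.sum_congr rfl (fun x _ => this x), Finset.sum_const, card_univ]
    simp
  · obtain ⟨e, he⟩ := exists_dot h
    have hre : ∑ x : Fin m → ZMod 2, chi x w = ∑ x : Fin m → ZMod 2, chi (x + e) w :=
      (Fintype.sum_equiv (Equiv.addRight e) _ _ (fun x => rfl)).symm
    have hneg : ∀ x : Fin m → ZMod 2, chi (x + e) w = - chi x w := by
      intro x
      rw [chi_add_left, chi_eq_neg_one he, mul_neg, mul_one]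
    rw [Finset.sum_congr rfl (fun x _ => hneg x), Finset.sum_neg_distrib] at hre
    have h2 : (2 : ℂ) * ∑ x : Fin m → ZMod 2, chi x w = 0 := by linear_combination hre
    rcases mul_eq_zero.mp h2 with h' | h'
    · norm_num at h'
    · exact h'

lemma z2_ne_one (p : ZMod 2) : ¬ p = 1 ↔ p = 0 := by revert p; decide

lemma card_dot_one {w : Fin m → ZMod 2} (hw : w ≠ 0) :
    2 * (univ.filter fun x : Fin m → ZMod 2 => x ⬝ᵥ w = 1).card = 2 ^ m := by
  obtain ⟨e, he⟩ := exists_dot hw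
  have hbij : (univ.filter fun x : Fin m → ZMod 2 => x ⬝ᵥ w = 0).card
      = (univ.filter fun x : Fin m → ZMod 2 => x ⬝ᵥ w = 1).card := by
    apply Finset.card_bij' (fun x _ => x + e) (fun x _ => x + e)
    · intro x hx
      simp only [mem_filter, mem_univ, true_and] at hx ⊢
      rw [add_dotProduct, hx, he, zero_add]
    · intro x hx
      simp only [mem_filter, mem_univ, true_and] at hx ⊢
      rw [add_dotProduct, hx, he]
      decide
    · intro x _; rw [add_assoc, vec_add_self, add_zero]
    · intro x _; rw [add_assoc, vec_add_self, add_zero]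
  have hsplit : (univ.filter fun x : Fin m → ZMod 2 => x ⬝ᵥ w = 1).card
      + (univ.filter fun x : Fin m → ZMod 2 => ¬ x ⬝ᵥ w = 1).card = 2 ^ m := by
    rw [Finset.card_filter_add_card_filter_not, card_univ]; simp
  have hng : (univ.filter fun x : Fin m → ZMod 2 => ¬ x ⬝ᵥ w = 1)
      = (univ.filter fun x : Fin m → ZMod 2 => x ⬝ᵥ w = 0) := by
    apply Finset.filter_congr
    intro x _
    simpa using z2_ne_one (x ⬝ᵥ w)
  rw [hng, hbij] at hsplit
  omega

lemma exists_dot_pair {v w : Fin m → ZMod 2} (hv : v ≠ 0) (hvw : w ≠ v) :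
    ∃ x, x ⬝ᵥ v = 1 ∧ x ⬝ᵥ w = 0 := by
  by_cases hw : w = 0
  · obtain ⟨e, he⟩ := exists_dot hv
    exact ⟨e, he, by simp [hw]⟩
  · obtain ⟨j, hj⟩ := Function.ne_iff.mp hvw
    obtain ⟨f, hf⟩ := exists_dot hv
    have hev : (Pi.single j (1 : ZMod 2)) ⬝ᵥ v = v j := by
      rw [single_dotProduct, one_mul]
    have hew : (Pi.single j (1 : ZMod 2)) ⬝ᵥ w = w j := by
      rw [single_dotProduct, one_mul]
    rcases z2cases (v j) with hvj | hvj <;> rcases z2cases (w j) with hwj | hwj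
    · exact absurd (hwj.trans hvj.symm) hj
    · -- v j = 0, w j = 1
      by_cases hfw : f ⬝ᵥ w = 0
      · exact ⟨f, hf, hfw⟩
      · refine ⟨f + Pi.single j 1, ?_, ?_⟩
        · rw [add_dotProduct, hf, hev, hvj, add_zero]
        · rw [add_dotProduct, hew, hwj]
          rcases z2cases (f ⬝ᵥ w) with h | h
          · exact absurd h hfw
          · rw [h]; decide
    · exact ⟨Pi.single j 1, by rw [hev, hvj], by rw [hew, hwj]⟩
    · exact absurd (hwj.trans hvj.symm) hj


def Qm (m : ℕ) : Matrix (Fin m → ZMod 2) (Fin m → ZMod 2) ℂ := Matrix.of fun x v => chi x v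

lemma two_pow_ne : ((2 ^ m : ℕ) : ℂ) ≠ 0 := by
  exact_mod_cast (Nat.cast_ne_zero (R := ℂ)).mpr (by positivity)

lemma QQ : Qm m * Qm m = ((2 ^ m : ℕ) : ℂ) • 1 := by
  ext u v
  rw [Matrix.mul_apply]
  have h1 : ∀ x, Qm m u x * Qm m x v = chi x (u + v) := by
    intro x
    show chi u x * chi x v = _
    rw [chi_comm u x, ← chi_add_right]
  rw [Finset.sum_congr rfl (fun x _ => h1 x), orth, Matrix.smul_apply, Matrix.one_apply]
  by_cases huv : u = v
  · rw [if_pos (add_eq_zero_iff'.mpr huv), if_pos huv]; simp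
  · rw [if_neg (fun h => huv (add_eq_zero_iff'.mp h)), if_neg huv]; simp

lemma A_eq (S : Finset (Fin m → ZMod 2)) :
    adjMatrix S = ((2 ^ m : ℕ) : ℂ)⁻¹ •
      (Qm m * Matrix.diagonal (fun x => ((lam S x : ℤ) : ℂ)) * Qm m) := by
  ext u v
  rw [Matrix.smul_apply, Matrix.mul_apply]
  have hlam : ∀ x : Fin m → ZMod 2, ((lam S x : ℤ) : ℂ) = ∑ s ∈ S, chi x s := by
    intro x
    unfold lam
    push_cast
    exact Finset.sum_congr rfl fun s _ => rfl
  have h1 : ∀ x, (Qm m * Matrix.diagonal fun y => ((lam S y : ℤ) : ℂ)) u x * Qm m x v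
      = ∑ s ∈ S, chi x (u + s + v) := by
    intro x
    rw [Matrix.mul_diagonal]
    show chi u x * ((lam S x : ℤ) : ℂ) * chi x v = _
    rw [chi_comm u x, hlam, Finset.mul_sum, Finset.sum_mul]
    refine Finset.sum_congr rfl fun s _ => ?_
    rw [chi_add_right x (u + s) v, chi_add_right x u s]
  rw [Finset.sum_congr rfl (fun x _ => h1 x), Finset.sum_comm]
  have h2 : ∀ s ∈ S, ∑ x : Fin m → ZMod 2, chi x (u + s + v)
      = if s = u + v then ((2 ^ m : ℕ) : ℂ) else 0 := by
    intro s _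
    rw [orth, show u + s + v = s + (u + v) by abel]
    by_cases hs : s = u + v
    · rw [if_pos (add_eq_zero_iff'.mpr hs), if_pos hs]
    · rw [if_neg (fun h => hs (add_eq_zero_iff'.mp h)), if_neg hs]
  rw [Finset.sum_congr rfl h2, Finset.sum_ite_eq' S (u + v) (fun _ => ((2 ^ m : ℕ) : ℂ))]
  show (if u + v ∈ S then (1:ℂ) else 0) = _
  split_ifs <;> simp [two_pow_ne]

def Qu (m : ℕ) : (Matrix (Fin m → ZMod 2) (Fin m → ZMod 2) ℂ)ˣ where
  val := Qm m
  inv := ((2 ^ m : ℕ) : ℂ)⁻¹ • Qm m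
  val_inv := by
    rw [Matrix.mul_smul, QQ, smul_smul, inv_mul_cancel₀ two_pow_ne, one_smul]
  inv_val := by
    rw [Matrix.smul_mul, QQ, smul_smul, inv_mul_cancel₀ two_pow_ne, one_smul]

lemma transfer_apply (S : Finset (Fin m → ZMod 2)) (t : ℝ) (u v : Fin m → ZMod 2) :
    transferMatrix S t u v = ((2 ^ m : ℕ) : ℂ)⁻¹ *
      ∑ x : Fin m → ZMod 2,
        Complex.exp (Complex.I * t * ((lam S x : ℤ) : ℂ)) * (chi x u * chi x v) := by
  have harg : Complex.I • ((t : ℂ) • adjMatrix S)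
      = (Qu m).val * Matrix.diagonal (fun x => Complex.I * t * ((lam S x : ℤ) : ℂ)) * ((Qu m)⁻¹).val := by
    rw [A_eq S]
    show _ = Qm m * _ * (((2 ^ m : ℕ) : ℂ)⁻¹ • Qm m)
    rw [show (Matrix.diagonal fun x => Complex.I * ↑t * ((lam S x : ℤ) : ℂ))
        = (Complex.I * t) • Matrix.diagonal (fun x => ((lam S x : ℤ) : ℂ)) by
      ext i j
      rw [Matrix.smul_apply]
      by_cases h : i = j
      · subst h; simp [Matrix.diagonal_apply_eq, smul_eq_mul]
      · simp [Matrix.diagonal_apply_ne _ h]]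
    rw [Matrix.mul_smul, Matrix.mul_smul, Matrix.smul_mul, smul_smul, smul_smul, smul_smul]
    congr 1
    ring
  rw [transferMatrix, harg, Matrix.exp_units_conj, Matrix.exp_diagonal, Pi.exp_def,
    show ((Qu m)⁻¹).val = ((2 ^ m : ℕ) : ℂ)⁻¹ • Qm m from rfl,
    show (Qu m).val = Qm m from rfl]
  rw [Matrix.mul_smul, Matrix.smul_apply, Matrix.mul_apply, smul_eq_mul]
  congr 1
  refine Finset.sum_congr rfl fun x _ => ?_
  rw [Matrix.mul_diagonal]
  show chi u x * _ * chi x v = _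
  rw [← Complex.exp_eq_exp_ℂ, chi_comm u x]
  ring


lemma chi_sub (x a b : Fin m → ZMod 2) :
    chi x a - chi x b = if x ⬝ᵥ (b + a) = 1 then 2 * chi x a else 0 := by
  have hb : chi x b = chi x (b + a) * chi x a := by
    rw [← chi_add_right, add_assoc, vec_add_self, add_zero]
  rcases z2cases (x ⬝ᵥ (b + a)) with h | h
  · rw [if_neg (by rw [h]; decide), hb, chi_eq_one h, one_mul, sub_self]
  · rw [if_pos h, hb, chi_eq_neg_one h]; ring

lemma F_eq (S : Finset (Fin m → ZMod 2)) (t : ℝ) (a b c d : Fin m → ZMod 2) :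
    (1/2 : ℂ) * dotProduct (stdBasis c - stdBasis d)
      (transferMatrix S t *ᵥ (stdBasis a - stdBasis b))
    = 2 * ((2 ^ m : ℕ) : ℂ)⁻¹ *
        ∑ x ∈ univ.filter (fun x : Fin m → ZMod 2 => x ⬝ᵥ (b + a) = 1 ∧ x ⬝ᵥ (d + c) = 1),
          Complex.exp (Complex.I * t * ((lam S x : ℤ) : ℂ)) * chi x (a + c) := by
  have hv : ∀ v, (transferMatrix S t *ᵥ (stdBasis a - stdBasis b)) v
      = transferMatrix S t v a - transferMatrix S t v b := by
    intro v
    simp [Matrix.mulVec, dotProduct, _root_.stdBasis, mul_sub, Finset.sum_sub_distrib, mul_ite,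
      mul_one, mul_zero, Finset.sum_ite_eq']
  have hdot : dotProduct (stdBasis c - stdBasis d)
        (transferMatrix S t *ᵥ (stdBasis a - stdBasis b))
      = (transferMatrix S t c a - transferMatrix S t c b)
        - (transferMatrix S t d a - transferMatrix S t d b) := by
    simp [dotProduct, _root_.stdBasis, sub_mul, Finset.sum_sub_distrib, ite_mul, one_mul, zero_mul,
      Finset.sum_ite_eq, Finset.sum_ite_eq', hv]
  rw [hdot, transfer_apply, transfer_apply, transfer_apply, transfer_apply,
    ← mul_sub, ← mul_sub, ← mul_sub, ← Finset.sum_sub_distrib, ← Finset.sum_sub_distrib,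
    ← Finset.sum_sub_distrib]
  have key : ∀ x : Fin m → ZMod 2,
      Complex.exp (Complex.I * t * ((lam S x : ℤ) : ℂ)) * (chi x c * chi x a)
        - Complex.exp (Complex.I * t * ((lam S x : ℤ) : ℂ)) * (chi x c * chi x b)
        - (Complex.exp (Complex.I * t * ((lam S x : ℤ) : ℂ)) * (chi x d * chi x a)
          - Complex.exp (Complex.I * t * ((lam S x : ℤ) : ℂ)) * (chi x d * chi x b))
      = if x ⬝ᵥ (b + a) = 1 ∧ x ⬝ᵥ (d + c) = 1 then
          (4 : ℂ) * (Complex.exp (Complex.I * t * ((lam S x : ℤ) : ℂ)) * chi x (a + c)) else 0 := by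
    intro x
    have h1 := chi_sub x a b
    have h2 := chi_sub x c d
    have hlhs : Complex.exp (Complex.I * t * ((lam S x : ℤ) : ℂ)) * (chi x c * chi x a)
        - Complex.exp (Complex.I * t * ((lam S x : ℤ) : ℂ)) * (chi x c * chi x b)
        - (Complex.exp (Complex.I * t * ((lam S x : ℤ) : ℂ)) * (chi x d * chi x a)
          - Complex.exp (Complex.I * t * ((lam S x : ℤ) : ℂ)) * (chi x d * chi x b))
        = Complex.exp (Complex.I * t * ((lam S x : ℤ) : ℂ))
            * ((chi x c - chi x d) * (chi x a - chi x b)) := by ring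
    rw [hlhs, h1, h2]
    by_cases hP : x ⬝ᵥ (b + a) = 1
    · by_cases hQ : x ⬝ᵥ (d + c) = 1
      · rw [if_pos hP, if_pos hQ, if_pos (⟨hP, hQ⟩ : _ ∧ _), chi_add_right x a c, chi_comm x c]
        ring
      · rw [if_pos hP, if_neg hQ, if_neg (fun h : x ⬝ᵥ (b + a) = 1 ∧ x ⬝ᵥ (d + c) = 1 => hQ h.2)]
        ring
    · rw [if_neg hP, if_neg (fun h : x ⬝ᵥ (b + a) = 1 ∧ x ⬝ᵥ (d + c) = 1 => hP h.1)]
      ring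
  rw [Finset.sum_congr rfl (fun x _ => key x), ← Finset.sum_filter, ← Finset.mul_sum]
  ring


lemma unit_of_re_one {v : ℂ} (habs : ‖v‖ = 1) (hre : v.re = 1) : v = 1 := by
  have hns : Complex.normSq v = 1 := by
    rw [← Complex.sq_norm, habs]; norm_num
  rw [Complex.normSq_apply, hre] at hns
  have him : v.im = 0 := by nlinarith
  exact Complex.ext (by simp [hre]) (by simp [him])

lemma abs_sum_eq_card_iff {α : Type*} [DecidableEq α] (T : Finset α) (u : α → ℂ)
    (hu : ∀ x ∈ T, ‖u x‖ = 1) :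
    ‖∑ x ∈ T, u x‖ = T.card ↔ ∀ x ∈ T, ∀ y ∈ T, u x = u y := by
  constructor
  · intro hz x hx y hy
    have hcpos : 0 < (T.card : ℝ) := by
      have : 0 < T.card := Finset.card_pos.mpr ⟨x, hx⟩
      exact_mod_cast this
    set z := ∑ p ∈ T, u p with hzdef
    set w : ℂ := z / (T.card : ℂ) with hwdef
    have hcne : ((T.card : ℂ)) ≠ 0 := by
      exact_mod_cast ne_of_gt (show (0:ℝ) < (T.card:ℝ) from hcpos)
    have hwabs : ‖w‖ = 1 := by
      rw [hwdef, norm_div, hz]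
      simp [hcne, Complex.norm_natCast]
      exact Finset.nonempty_iff_ne_empty.mp ⟨x, hx⟩
    have habs1 : ∀ p ∈ T, ‖(starRingEnd ℂ) w * u p‖ = 1 := by
      intro p hp
      rw [norm_mul, Complex.norm_conj, hwabs, hu p hp, one_mul]
    have h1 : ((Complex.normSq z : ℝ) : ℂ) = (T.card : ℂ) ^ 2 := by
      rw [← Complex.sq_norm, hz]
      push_cast
      ring
    have hsum_eq : ∑ q ∈ T, ((starRingEnd ℂ) w * u q) = (T.card : ℂ) := by
      rw [← Finset.mul_sum, ← hzdef, hwdef, map_div₀, Complex.conj_natCast,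
        div_mul_eq_mul_div, ← Complex.normSq_eq_conj_mul_self, h1, sq, mul_div_assoc,
        div_self hcne, mul_one]
    have hre_sum : ∑ q ∈ T, ((starRingEnd ℂ) w * u q).re = (T.card : ℝ) := by
      rw [← Complex.re_sum, hsum_eq]
      simp
    have hle : ∀ q ∈ T, ((starRingEnd ℂ) w * u q).re ≤ 1 := by
      intro q hq
      calc ((starRingEnd ℂ) w * u q).re ≤ ‖(starRingEnd ℂ) w * u q‖ :=
            Complex.re_le_norm _
        _ = 1 := habs1 q hq
    have hall : ∀ q ∈ T, ((starRingEnd ℂ) w * u q).re = (fun _ => (1:ℝ)) q := by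
      refine (Finset.sum_eq_sum_iff_of_le hle).mp ?_
      rw [hre_sum]
      simp
    have hkey : ∀ p ∈ T, (starRingEnd ℂ) w * u p = 1 := by
      intro p hp
      exact unit_of_re_one (habs1 p hp) (hall p hp)
    have hx1 := hkey x hx
    have hy1 := hkey y hy
    have hwne : (starRingEnd ℂ) w ≠ 0 := by
      intro h
      rw [h, zero_mul] at hx1
      exact zero_ne_one hx1
    exact mul_left_cancel₀ hwne (hx1.trans hy1.symm)
  · intro h
    rcases T.eq_empty_or_nonempty with rfl | ⟨x₀, hx₀⟩
    · simp
    · rw [Finset.sum_congr rfl (fun x hx => h x hx x₀ hx₀), Finset.sum_const, nsmul_eq_mul,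
        norm_mul, Complex.norm_natCast, hu x₀ hx₀, mul_one]


lemma z2four (p q r s : ZMod 2) (h : p + q + r + s = 0) : s + r = q + p := by
  revert p q r s; decide

lemma z2four' (p q r s : ZMod 2) (h : s + r = q + p) : p + q + r + s = 0 := by
  revert p q r s; decide

lemma habs_exp {m : ℕ} (S : Finset (Fin m → ZMod 2)) (t : ℝ) (x : Fin m → ZMod 2) :
    ‖Complex.exp (Complex.I * t * ((lam S x : ℤ) : ℂ))‖ = 1 := by
  have h0 : (Complex.I * t * ((lam S x : ℤ) : ℂ)).re = 0 := by
    simp [Complex.mul_re, Complex.mul_im]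
  rw [Complex.norm_exp, h0, Real.exp_zero]

end PESTAux

open PESTAux in
/-- Characterization of PEST on cubelike graphs at a given time `t` (Lemma 1). -/
theorem hasPEST_iff_cubelike {m : ℕ} (hm : 1 ≤ m)
    (S : Finset (Fin m → ZMod 2)) (h0 : (0 : Fin m → ZMod 2) ∉ S)
    (a b c d : Fin m → ZMod 2) (hab : a + b ∈ S) (hcd : c + d ∈ S)
    (hbc : b ≠ c) (had : a ≠ d) (t : ℝ) (ht : 0 < t) :
    hasPEST S a b c d t ↔
      a + b + c + d = 0 ∧
      ∀ x₀ : Fin m → ZMod 2, (b + a) ⬝ᵥ x₀ = 1 → (c + a) ⬝ᵥ x₀ = 0 →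
        ∀ x : Fin m → ZMod 2, (b + a) ⬝ᵥ x = 1 →
          Complex.exp (Complex.I * t * ((lam S x₀ - lam S x : ℤ) : ℂ)) =
            (-1 : ℂ) ^ ((c + a) ⬝ᵥ x).val := by
  classical
  obtain ⟨k, rfl⟩ : ∃ k, m = k + 1 := ⟨m - 1, by omega⟩
  have hba : (b + a : Fin (k+1) → ZMod 2) ≠ 0 := by
    intro h
    have h' := hab
    rw [show a + b = b + a from add_comm a b, h] at h'
    exact h0 h'
  have hdc0 : (d + c : Fin (k+1) → ZMod 2) ≠ 0 := by
    intro h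
    have h' := hcd
    rw [show c + d = d + c from add_comm c d, h] at h'
    exact h0 h'
  unfold hasPEST
  rw [F_eq]
  set Y := univ.filter (fun x : Fin (k+1) → ZMod 2 => x ⬝ᵥ (b + a) = 1) with hYdef
  have hcardY : Y.card = 2 ^ k := by
    have h1 := card_dot_one hba
    have h2 : (2:ℕ) ^ (k+1) = 2 * 2 ^ k := by ring
    rw [← hYdef] at h1
    omega
  have hu1 : ∀ x : Fin (k+1) → ZMod 2,
      ‖Complex.exp (Complex.I * t * ((lam S x : ℤ) : ℂ)) * chi x (a + c)‖ = 1 := by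
    intro x
    rw [norm_mul, habs_exp, abs_chi, mul_one]
  have habsC : ‖2 * ((2 ^ (k+1) : ℕ) : ℂ)⁻¹‖ = 2 * ((2:ℝ) ^ (k+1))⁻¹ := by
    rw [norm_mul, norm_inv, Complex.norm_natCast, Complex.norm_two]
    push_cast
    ring
  have hCpos : (0:ℝ) < 2 * ((2:ℝ) ^ (k+1))⁻¹ := by positivity
  constructor
  · intro hPEST
    have hnn := norm_nonneg
      (2 * ((2 ^ (k+1) : ℕ) : ℂ)⁻¹ * ∑ x ∈ univ.filter
        (fun x : Fin (k+1) → ZMod 2 => x ⬝ᵥ (b + a) = 1 ∧ x ⬝ᵥ (d + c) = 1),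
        Complex.exp (Complex.I * t * ((lam S x : ℤ) : ℂ)) * chi x (a + c))
    have hF : ‖2 * ((2 ^ (k+1) : ℕ) : ℂ)⁻¹ * ∑ x ∈ univ.filter
        (fun x : Fin (k+1) → ZMod 2 => x ⬝ᵥ (b + a) = 1 ∧ x ⬝ᵥ (d + c) = 1),
        Complex.exp (Complex.I * t * ((lam S x : ℤ) : ℂ)) * chi x (a + c)‖ = 1 := by
      nlinarith [hPEST]
    have habcd : a + b + c + d = 0 := by
      by_contra hne
      have hne' : (d + c : Fin (k+1) → ZMod 2) ≠ b + a := by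
        intro h
        apply hne
        funext i
        have hi := congrFun h i
        simp only [Pi.add_apply, Pi.zero_apply] at hi ⊢
        exact z2four' _ _ _ _ hi
      obtain ⟨x₁, hx11, hx12⟩ := exists_dot_pair hba hne'
      have hx1Y : x₁ ∈ Y := by rw [hYdef]; exact mem_filter.mpr ⟨mem_univ _, hx11⟩
      have hXsub : univ.filter
          (fun x : Fin (k+1) → ZMod 2 => x ⬝ᵥ (b + a) = 1 ∧ x ⬝ᵥ (d + c) = 1)
          ⊆ Y.erase x₁ := by
        intro x hx
        simp only [mem_filter, mem_univ, true_and] at hx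
        refine Finset.mem_erase.mpr ⟨?_, by rw [hYdef]; exact mem_filter.mpr ⟨mem_univ _, hx.1⟩⟩
        intro h
        have h2 := hx.2
        rw [h, hx12] at h2
        exact (by decide : ¬ ((0:ZMod 2) = 1)) h2
      have hcardX : (univ.filter
          (fun x : Fin (k+1) → ZMod 2 => x ⬝ᵥ (b + a) = 1 ∧ x ⬝ᵥ (d + c) = 1)).card
          ≤ 2 ^ k - 1 := by
        calc _ ≤ (Y.erase x₁).card := Finset.card_le_card hXsub
          _ = Y.card - 1 := Finset.card_erase_of_mem hx1Y
          _ = 2 ^ k - 1 := by rw [hcardY]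
      have habs_sum : ‖∑ x ∈ univ.filter
          (fun x : Fin (k+1) → ZMod 2 => x ⬝ᵥ (b + a) = 1 ∧ x ⬝ᵥ (d + c) = 1),
          Complex.exp (Complex.I * t * ((lam S x : ℤ) : ℂ)) * chi x (a + c)‖
          ≤ (2:ℝ) ^ k - 1 := by
        calc ‖_‖ ≤ ∑ x ∈ univ.filter
              (fun x : Fin (k+1) → ZMod 2 => x ⬝ᵥ (b + a) = 1 ∧ x ⬝ᵥ (d + c) = 1),
              ‖Complex.exp (Complex.I * t * ((lam S x : ℤ) : ℂ)) * chi x (a + c)‖ :=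
            norm_sum_le _ _
          _ = (univ.filter
              (fun x : Fin (k+1) → ZMod 2 => x ⬝ᵥ (b + a) = 1 ∧ x ⬝ᵥ (d + c) = 1)).card := by
            rw [Finset.sum_congr rfl (fun x _ => hu1 x), Finset.sum_const, nsmul_eq_mul, mul_one]
          _ ≤ ((2 ^ k - 1 : ℕ) : ℝ) := by exact_mod_cast hcardX
          _ ≤ (2:ℝ) ^ k - 1 := by
            rw [Nat.cast_sub Nat.one_le_two_pow]
            push_cast
            norm_num
      rw [norm_mul, habsC] at hF
      have hkey : 2 * ((2:ℝ) ^ (k+1))⁻¹ * ((2:ℝ) ^ k - 1) = 1 - ((2:ℝ) ^ k)⁻¹ := by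
        rw [pow_succ]
        have hp : (0:ℝ) < 2 ^ k := by positivity
        field_simp
      have hpi : (0:ℝ) < ((2:ℝ) ^ k)⁻¹ := by positivity
      have hb2 := mul_le_mul_of_nonneg_left habs_sum hCpos.le
      linarith [hb2, hkey, hpi, hF]
    refine ⟨habcd, ?_⟩
    have hdc : (d + c : Fin (k+1) → ZMod 2) = b + a := by
      funext i
      have hi := congrFun habcd i
      simp only [Pi.add_apply, Pi.zero_apply] at hi ⊢
      exact z2four _ _ _ _ hi
    have hXY : univ.filter
        (fun x : Fin (k+1) → ZMod 2 => x ⬝ᵥ (b + a) = 1 ∧ x ⬝ᵥ (d + c) = 1) = Y := by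
      rw [hYdef, hdc]
      ext x
      simp [and_self]
    rw [hXY] at hF
    have habsSum : ‖∑ x ∈ Y,
        Complex.exp (Complex.I * t * ((lam S x : ℤ) : ℂ)) * chi x (a + c)‖ = Y.card := by
      rw [norm_mul, habsC] at hF
      have hkey2 : 2 * ((2:ℝ) ^ (k+1))⁻¹ * ((2:ℝ) ^ k) = 1 := by
        rw [pow_succ]
        have hp : (0:ℝ) < 2 ^ k := by positivity
        field_simp
      have hcc := mul_left_cancel₀ (ne_of_gt hCpos) (hF.trans hkey2.symm)
      rw [hcardY]
      push_cast
      exact hcc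
    have hallEq := (abs_sum_eq_card_iff Y _ (fun x _ => hu1 x)).mp habsSum
    intro x₀ h1 h2 x hx
    have hx₀Y : x₀ ∈ Y := by
      rw [hYdef]
      simp only [mem_filter, mem_univ, true_and]
      rw [dotProduct_comm]
      exact h1
    have hxY : x ∈ Y := by
      rw [hYdef]
      simp only [mem_filter, mem_univ, true_and]
      rw [dotProduct_comm]
      exact hx
    have heq := hallEq x₀ hx₀Y x hxY
    have hchi₀ : chi x₀ (a + c) = 1 := by
      apply chi_eq_one
      rw [dotProduct_comm, add_comm a c]
      exact h2
    rw [hchi₀, mul_one] at heq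
    have hgoal : Complex.exp (Complex.I * t * ((lam S x₀ - lam S x : ℤ) : ℂ)) = chi x (a + c) := by
      have harg : Complex.I * t * ((lam S x₀ - lam S x : ℤ) : ℂ)
          = Complex.I * t * ((lam S x₀ : ℤ) : ℂ) - Complex.I * t * ((lam S x : ℤ) : ℂ) := by
        push_cast
        ring
      rw [harg, Complex.exp_sub, heq]
      rw [mul_comm, mul_div_assoc, div_self (Complex.exp_ne_zero _), mul_one]
    rw [hgoal]
    unfold chi
    rw [dotProduct_comm, add_comm a c]
  · rintro ⟨habcd, hcond⟩
    have hdc : (d + c : Fin (k+1) → ZMod 2) = b + a := by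
      funext i
      have hi := congrFun habcd i
      simp only [Pi.add_apply, Pi.zero_apply] at hi ⊢
      exact z2four _ _ _ _ hi
    have hXY : univ.filter
        (fun x : Fin (k+1) → ZMod 2 => x ⬝ᵥ (b + a) = 1 ∧ x ⬝ᵥ (d + c) = 1) = Y := by
      rw [hYdef, hdc]
      ext x
      simp [and_self]
    rw [hXY]
    have hca : (c + a : Fin (k+1) → ZMod 2) ≠ b + a := fun h => hbc (add_right_cancel h).symm
    obtain ⟨x₀, hx₀1, hx₀2⟩ := exists_dot_pair hba hca
    have hconst : ∀ x ∈ Y, Complex.exp (Complex.I * t * ((lam S x : ℤ) : ℂ)) * chi x (a + c)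
        = Complex.exp (Complex.I * t * ((lam S x₀ : ℤ) : ℂ)) := by
      intro x hx
      have hx' : x ⬝ᵥ (b + a) = 1 := by
        rw [hYdef] at hx
        exact (mem_filter.mp hx).2
      have hc := hcond x₀ (by rw [dotProduct_comm]; exact hx₀1)
        (by rw [dotProduct_comm]; exact hx₀2) x (by rw [dotProduct_comm]; exact hx')
      have hc' : Complex.exp (Complex.I * t * ((lam S x₀ - lam S x : ℤ) : ℂ)) = chi x (a + c) := by
        rw [hc]
        unfold chi
        rw [dotProduct_comm, add_comm a c]
      rw [← hc', ← Complex.exp_add]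
      congr 1
      push_cast
      ring
    rw [Finset.sum_congr rfl hconst, Finset.sum_const, hcardY, nsmul_eq_mul, norm_mul,
      habsC, norm_mul, Complex.norm_natCast, habs_exp]
    have hp : (0:ℝ) < 2 ^ k := by positivity
    push_cast
    rw [pow_succ]
    field_simp
    ring

end
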